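/- There exists an isomorphism of topological groups lim_{[p]} Kˣ/q^ℤ ≅ lim_{[p]} Kˣ/q'^ℤ, i.e. a group isomorphism between the two p-adic universal covers which is simultaneously a homeomorphism. -/

import Mathlib

open Filter Topology

namespace TateCoverAux

variable {K : Type*} [NormedField K]

theorem ultra (hu : ∀ a b : K, ‖a + b‖ ≤ max ‖a‖ ‖b‖) : IsUltrametricDist K :=
  IsUltrametricDist.isUltrametricDist_of_forall_norm_add_le_max_norm hu

section NormLemmas

variable (hu : ∀ a b : K, ‖a + b‖ ≤ max ‖a‖ ‖b‖)
include hu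

theorem norm_le_one_of_sub (a : K) (ha : ‖a - 1‖ ≤ 1) : ‖a‖ ≤ 1 := by
  have h : a = (a - 1) + 1 := by ring
  rw [h]
  refine (hu _ _).trans ?_
  rw [norm_one]
  exact max_le ha le_rfl

theorem mul_sub_one_le (a b : K) (hb : ‖b - 1‖ ≤ 1) :
    ‖a * b - 1‖ ≤ max ‖a - 1‖ ‖b - 1‖ := by
  have h : a * b - 1 = (a - 1) * b + (b - 1) := by ring
  rw [h]
  refine (hu _ _).trans (max_le_max ?_ le_rfl)
  rw [norm_mul]
  calc ‖a - 1‖ * ‖b‖ ≤ ‖a - 1‖ * 1 :=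
        mul_le_mul_of_nonneg_left (norm_le_one_of_sub hu b hb) (norm_nonneg _)
    _ = ‖a - 1‖ := mul_one _

theorem pow_sub_one_le (a : K) (ha : ‖a - 1‖ ≤ 1) (m : ℕ) : ‖a ^ m - 1‖ ≤ ‖a - 1‖ := by
  induction m with
  | zero => simpa using norm_nonneg (a - 1)
  | succ m ih =>
      rw [pow_succ]
      exact (mul_sub_one_le hu _ _ ha).trans (max_le ih le_rfl)

theorem norm_eq_one_of_sub_lt (a : K) (ha : ‖a - 1‖ < 1) : ‖a‖ = 1 := by
  refine le_antisymm (norm_le_one_of_sub hu a ha.le) ?_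
  by_contra hlt
  push_neg at hlt
  have h : (1 : K) = a + (1 - a) := by ring
  have h1 : ‖(1 : K)‖ ≤ max ‖a‖ ‖1 - a‖ := by
    calc ‖(1:K)‖ = ‖a + (1 - a)‖ := by rw [← h]
      _ ≤ max ‖a‖ ‖1 - a‖ := hu _ _
  rw [norm_one, norm_sub_rev] at h1
  rcases max_cases ‖a‖ ‖a - 1‖ with ⟨he, _⟩ | ⟨he, _⟩ <;> rw [he] at h1 <;> linarith

theorem unit_zpow_sub_one_le (β : Kˣ) (hb : ‖(β : K) - 1‖ < 1) (m : ℤ) :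
    ‖((β ^ m : Kˣ) : K) - 1‖ ≤ ‖(β : K) - 1‖ := by
  have hβ : ‖(β : K)‖ = 1 := norm_eq_one_of_sub_lt hu _ hb
  induction m using Int.rec with
  | ofNat n =>
      rw [Int.ofNat_eq_coe, zpow_natCast, Units.val_pow_eq_pow_val]
      exact pow_sub_one_le hu _ hb.le n
  | negSucc n =>
      rw [zpow_negSucc]
      have hw : ((β ^ (n + 1) : Kˣ) : K) = (β : K) ^ (n + 1) := Units.val_pow_eq_pow_val _ _
      have hwn : ‖((β ^ (n + 1) : Kˣ) : K)‖ = 1 := by rw [hw, norm_pow, hβ, one_pow]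
      have hkey : (((β ^ (n + 1))⁻¹ : Kˣ) : K) - 1
          = (((β ^ (n + 1))⁻¹ : Kˣ) : K) * (1 - ((β ^ (n + 1) : Kˣ) : K)) := by
        have := Units.inv_mul (β ^ (n + 1))
        rw [mul_sub, mul_one]
        rw [show ((((β ^ (n+1))⁻¹ : Kˣ) : K)) * ((β ^ (n+1) : Kˣ) : K) = 1 by
          rw [← Units.val_mul, inv_mul_cancel, Units.val_one]]
      rw [hkey, norm_mul]
      have hinv : ‖(((β ^ (n + 1))⁻¹ : Kˣ) : K)‖ = 1 := by
        have h2 : ‖(((β ^ (n+1))⁻¹ : Kˣ) : K)‖ * ‖((β ^ (n+1) : Kˣ) : K)‖ = 1 := by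
          rw [← norm_mul, ← Units.val_mul, inv_mul_cancel, Units.val_one, norm_one]
        rw [hwn, mul_one] at h2
        exact h2
      rw [hinv, one_mul, norm_sub_rev, hw]
      exact pow_sub_one_le hu _ hb.le (n + 1)

theorem pow_p_sub_one_le (p : ℕ) {t : K} {s r : ℝ} (ht : ‖t - 1‖ ≤ s) (hs : s ≤ r)
    (hr : r ≤ 1) : ‖t ^ p - 1‖ ≤ max ‖(p : K)‖ r * s := by
  haveI := ultra hu
  have h0s : (0 : ℝ) ≤ s := le_trans (norm_nonneg _) ht
  have h0r : (0 : ℝ) ≤ r := le_trans h0s hs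
  rw [← geom_sum_mul t p, norm_mul]
  have hsum : ‖∑ k ∈ Finset.range p, t ^ k‖ ≤ max ‖(p : K)‖ r := by
    have hsplit : ∑ k ∈ Finset.range p, t ^ k
        = (p : K) + ∑ k ∈ Finset.range p, (t ^ k - 1) := by
      rw [Finset.sum_sub_distrib]
      simp
    rw [hsplit]
    refine (hu _ _).trans (max_le_max le_rfl ?_)
    refine IsUltrametricDist.norm_sum_le_of_forall_le_of_nonneg h0r ?_
    intro k _
    exact le_trans (le_trans (pow_sub_one_le hu t (le_trans ht (le_trans hs hr)) k) ht) hs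
  calc ‖∑ k ∈ Finset.range p, t ^ k‖ * ‖t - 1‖ ≤ max ‖(p : K)‖ r * s :=
    mul_le_mul hsum ht (norm_nonneg _) (le_max_of_le_right h0r)

theorem pow_p_pow_sub_one_le (p : ℕ) {t : K} {r : ℝ} (ht : ‖t - 1‖ ≤ r) (hr : r ≤ 1)
    (m : ℕ) : ‖t ^ p ^ m - 1‖ ≤ (max ‖(p : K)‖ r) ^ m * r := by
  haveI := ultra hu
  have h0r : (0 : ℝ) ≤ r := le_trans (norm_nonneg _) ht
  have hc1 : max ‖(p : K)‖ r ≤ 1 :=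
    max_le (IsUltrametricDist.norm_natCast_le_one K p) hr
  have hc0 : (0 : ℝ) ≤ max ‖(p : K)‖ r := le_max_of_le_right h0r
  induction m with
  | zero => simpa using ht
  | succ m ih =>
      have hcm : (max ‖(p : K)‖ r) ^ m * r ≤ r :=
        mul_le_of_le_one_left h0r (pow_le_one₀ hc0 hc1)
      have h2 := pow_p_sub_one_le hu p ih hcm hr
      rw [← pow_mul] at h2
      rw [pow_succ]
      calc ‖t ^ (p ^ m * p) - 1‖ ≤ max ‖(p:K)‖ r * ((max ‖(p:K)‖ r) ^ m * r) := h2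
        _ = (max ‖(p:K)‖ r) ^ (m + 1) * r := by ring

end NormLemmas

/-- `lim_{[p]} Kˣ/N` for a general subgroup `N`. -/
def cover (K : Type*) [NormedField K] (p : ℕ) (N : Subgroup Kˣ) :
    Subgroup (∀ _ : ℕ, Kˣ ⧸ N) where
  carrier := {x | ∀ n : ℕ, x n = x (n + 1) ^ p}
  one_mem' := by intro n; simp
  mul_mem' := by
    intro a b ha hb n
    simp only [Pi.mul_apply]
    rw [ha n, hb n]
    exact (mul_pow (a (n + 1)) (b (n + 1)) p).symm
  inv_mem' := by
    intro a ha n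
    simp only [Pi.inv_apply]
    rw [ha n]
    exact (inv_pow (a (n + 1)) p).symm

variable {p : ℕ} {N M : Subgroup Kˣ}

theorem cover_prop {x : ∀ _ : ℕ, Kˣ ⧸ N} (hx : x ∈ cover K p N) (n : ℕ) :
    x n = x (n + 1) ^ p := hx n

theorem cover_pow {x : ∀ _ : ℕ, Kˣ ⧸ N} (hx : x ∈ cover K p N) (n m : ℕ) :
    x n = x (n + m) ^ p ^ m := by
  induction m with
  | zero => simp
  | succ m ih =>
      rw [ih, hx (n + m), ← pow_mul, ← pow_succ', ← add_assoc]

/-- The natural map between covers induced by `N ≤ M`. -/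
def coverMap (K : Type*) [NormedField K] (p : ℕ) {N M : Subgroup Kˣ} (h : N ≤ M) :
    cover K p N →* cover K p M where
  toFun x := ⟨fun n => QuotientGroup.map N M (MonoidHom.id Kˣ) h (x.1 n), by
    intro n
    simp only
    rw [cover_prop x.2 n, map_pow]⟩
  map_one' := by
    ext n
    simp
  map_mul' x y := by
    ext n
    simp

theorem coverMap_apply (h : N ≤ M) (x : cover K p N) (n : ℕ) :
    ((coverMap K p h x : ∀ _ : ℕ, Kˣ ⧸ M)) n
      = QuotientGroup.map N M (MonoidHom.id Kˣ) h ((x : ∀ _ : ℕ, Kˣ ⧸ N) n) := rfl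

end TateCoverAux

/-- The `p`-adic universal cover `lim_{[p]} Kˣ/u^ℤ` of the Tate curve `Kˣ/u^ℤ`:
the topological group of sequences `(xₙ)` in `Kˣ/u^ℤ` with `xₙ = x_{n+1}^p`,
topologized as a subgroup of the countable product. -/
def padicUniversalCover (K : Type*) [NormedField K] (p : ℕ) (u : Kˣ) :
    Subgroup (∀ _ : ℕ, Kˣ ⧸ Subgroup.zpowers u) where
  carrier := {x | ∀ n : ℕ, x n = x (n + 1) ^ p}
  one_mem' := by intro n; simp
  mul_mem' := by
    intro a b ha hb n
    simp only [Pi.mul_apply]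
    rw [ha n, hb n]
    exact (mul_pow (a (n + 1)) (b (n + 1)) p).symm
  inv_mem' := by
    intro a ha n
    simp only [Pi.inv_apply]
    rw [ha n]
    exact (inv_pow (a (n + 1)) p).symm

namespace TateCoverAux

/-- The key step: if `Z` is a closed subgroup of `1`-units bounded by `r < 1`, and `N`
contains no nontrivial norm-one elements, then `cover N → cover (N ⊔ Z)` is an
isomorphism of topological groups. -/
theorem key (K : Type*) [NormedField K] [CompleteSpace K]
    (hu : ∀ a b : K, ‖a + b‖ ≤ max ‖a‖ ‖b‖)
    (p : ℕ) (hpK : ‖(p : K)‖ < 1)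
    (r : ℝ) (hr1 : r < 1)
    (N Z M : Subgroup Kˣ) (hM : N ⊔ Z = M)
    (hZc : IsClosed (Z : Set Kˣ))
    (hZr : ∀ t ∈ Z, ‖(t : K) - 1‖ ≤ r)
    (hN : ∀ x ∈ N, ‖(x : K)‖ = 1 → x = 1) :
    ∃ e : cover K p N ≃* cover K p M, Continuous e ∧ Continuous e.symm := by
  classical
  haveI := ultra hu
  have hr0 : (0 : ℝ) ≤ r := by simpa using hZr 1 Z.one_mem
  set c : ℝ := max ‖(p : K)‖ r with hc
  have hc1 : c < 1 := max_lt hpK hr1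
  have hc0 : (0 : ℝ) ≤ c := le_max_of_le_right hr0
  have hNM : N ≤ M := hM ▸ le_sup_left
  have hZM : Z ≤ M := hM ▸ le_sup_right
  have hZnorm : ∀ t ∈ Z, ‖(t : K)‖ = 1 := fun t ht =>
    norm_eq_one_of_sub_lt hu _ (lt_of_le_of_lt (hZr t ht) hr1)
  have hZ1 : ∀ t ∈ Z, ∀ m : ℕ, ‖((t : K)) ^ p ^ m - 1‖ ≤ c ^ m * r := fun t ht m =>
    pow_p_pow_sub_one_le hu p (hZr t ht) hr1.le m
  have hc_tendsto : Tendsto (fun m : ℕ => c ^ m * r) atTop (𝓝 0) := by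
    simpa using (tendsto_pow_atTop_nhds_zero_of_lt_one hc0 hc1).mul_const r
  have hmk : ∀ A T : Kˣ, (A * T)⁻¹ * T = A⁻¹ := by
    intro A T
    rw [mul_inv_rev, mul_assoc, mul_comm A⁻¹ T, ← mul_assoc, inv_mul_cancel, one_mul]
  set φ : cover K p N →* cover K p M := coverMap K p hNM with hφ
  -- injectivity
  have hinj : Function.Injective φ := by
    rw [injective_iff_map_eq_one]
    intro x hx1
    choose ξ hξ using fun n => QuotientGroup.mk_surjective ((x : ∀ _ : ℕ, Kˣ ⧸ N) n)
    have hmem : ∀ n, ξ n ∈ M := by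
      intro n
      have h1 : QuotientGroup.map N M (MonoidHom.id Kˣ) hNM ((x : ∀ _ : ℕ, Kˣ ⧸ N) n) = 1 := by
        have := congrArg (fun y : cover K p M => (y : ∀ _ : ℕ, Kˣ ⧸ M) n) hx1
        exact this
      rw [← hξ n] at h1
      change (QuotientGroup.mk (ξ n) : Kˣ ⧸ M) = 1 at h1
      simpa using (QuotientGroup.eq_one_iff _).mp h1
    have hdec : ∀ n, ∃ t ∈ Z, ∃ a ∈ N, a * t = ξ n := by
      intro n
      have h2 := hmem n
      rw [← hM] at h2
      rcases Subgroup.mem_sup.mp h2 with ⟨a, ha, t, ht, hat⟩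
      exact ⟨t, ht, a, ha, hat⟩
    choose t htZ a haN hat using hdec
    have hxn : ∀ n, (x : ∀ _ : ℕ, Kˣ ⧸ N) n = QuotientGroup.mk (t n) := by
      intro n
      rw [← hξ n, ← hat n]
      refine (QuotientGroup.eq).mpr ?_
      rw [hmk (a n) (t n)]
      exact N.inv_mem (haN n)
    have hrel : ∀ n, t n = t (n + 1) ^ p := by
      intro n
      have h := cover_prop x.2 n
      rw [hxn n, hxn (n + 1), ← QuotientGroup.mk_pow] at h
      have hd : (t n)⁻¹ * t (n + 1) ^ p ∈ N := (QuotientGroup.eq).mp h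
      have hdZ : (t n)⁻¹ * t (n + 1) ^ p ∈ Z :=
        Z.mul_mem (Z.inv_mem (htZ n)) (Z.pow_mem (htZ (n + 1)) p)
      have hd1 : (t n)⁻¹ * t (n + 1) ^ p = 1 := hN _ hd (hZnorm _ hdZ)
      exact (inv_mul_eq_one.mp hd1)
    have hiter : ∀ n m, t n = t (n + m) ^ p ^ m := by
      intro n m
      induction m with
      | zero => simp
      | succ m ih =>
          rw [ih, hrel (n + m), ← pow_mul, ← pow_succ', ← add_assoc]
    have htone : ∀ n, t n = 1 := by
      intro n
      have hb : ∀ m : ℕ, ‖((t n : K)) - 1‖ ≤ c ^ m * r := by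
        intro m
        have := hZ1 (t (n + m)) (htZ (n + m)) m
        rw [← Units.val_pow_eq_pow_val, ← hiter n m] at this
        exact this
      have hle : ‖((t n : K)) - 1‖ ≤ 0 := ge_of_tendsto' hc_tendsto hb
      have : ((t n : K)) - 1 = 0 := norm_le_zero_iff.mp hle
      exact Units.ext (by simpa [sub_eq_zero] using this)
    apply Subtype.ext
    funext n
    rw [show ((x : ∀ _ : ℕ, Kˣ ⧸ N)) n = ((x : cover K p N) : ∀ _ : ℕ, Kˣ ⧸ N) n from rfl]
    rw [hxn n, htone n]
    simp
  -- surjectivity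
  have hsurj : Function.Surjective φ := by
    intro y
    choose ξ hξ using fun n => QuotientGroup.mk_surjective ((y : ∀ _ : ℕ, Kˣ ⧸ M) n)
    have hmem : ∀ n, (ξ n)⁻¹ * ξ (n + 1) ^ p ∈ M := by
      intro n
      refine (QuotientGroup.eq).mp ?_
      rw [hξ n, QuotientGroup.mk_pow, hξ (n + 1)]
      exact cover_prop y.2 n
    have hdec : ∀ n, ∃ t ∈ Z, ∃ a ∈ N, a * t = (ξ n)⁻¹ * ξ (n + 1) ^ p := by
      intro n
      have h2 := hmem n
      rw [← hM] at h2
      rcases Subgroup.mem_sup.mp h2 with ⟨a, ha, t, ht, hat⟩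
      exact ⟨t, ht, a, ha, hat⟩
    choose t htZ a haN hat using hdec
    set T : ℕ → ℕ → Kˣ := fun n m => ∏ j ∈ Finset.range m, t (n + j) ^ p ^ j with hT
    have hTmem : ∀ n m, T n m ∈ Z := by
      intro n m
      exact Subgroup.prod_mem Z fun j _ => Z.pow_mem (htZ (n + j)) _
    have hTval : ∀ n m, ((T n m : K)) = ∏ j ∈ Finset.range m, ((t (n + j) : K)) ^ p ^ j := by
      intro n m
      rw [hT]
      push_cast
      rfl
    have hTbound : ∀ n m, ‖((T n m : K)) - 1‖ ≤ r := by
      intro n m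
      induction m with
      | zero => simpa [hTval] using hr0
      | succ m ih =>
          have hstep : ((T n (m + 1) : K)) = ((T n m : K)) * ((t (n + m) : K)) ^ p ^ m := by
            rw [hTval, Finset.prod_range_succ, ← hTval]
          rw [hstep]
          have h1 : ‖((t (n + m) : K)) ^ p ^ m - 1‖ ≤ 1 :=
            le_trans (le_trans (hZ1 _ (htZ (n + m)) m)
              (mul_le_of_le_one_left hr0 (pow_le_one₀ hc0 hc1.le))) hr1.le
          refine (mul_sub_one_le hu _ _ h1).trans (max_le ih ?_)
          exact le_trans (hZ1 _ (htZ (n + m)) m) (mul_le_of_le_one_left hr0 (pow_le_one₀ hc0 hc1.le))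
    have hTnorm : ∀ n m, ‖((T n m : K))‖ ≤ 1 := fun n m =>
      norm_le_one_of_sub (by exact hu) _ (le_trans (hTbound n m) hr1.le)
    have hcauchy : ∀ n, CauchySeq fun m => ((T n m : K)) := by
      intro n
      refine cauchySeq_of_le_geometric c r hc1 fun m => ?_
      have hstep : ((T n (m + 1) : K)) = ((T n m : K)) * ((t (n + m) : K)) ^ p ^ m := by
        rw [hTval, Finset.prod_range_succ, ← hTval]
      rw [dist_eq_norm, hstep]
      have : ((T n m : K)) - ((T n m : K)) * ((t (n + m) : K)) ^ p ^ m
          = ((T n m : K)) * (1 - ((t (n + m) : K)) ^ p ^ m) := by ring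
      rw [this, norm_mul, norm_sub_rev]
      calc ‖((T n m : K))‖ * ‖((t (n + m) : K)) ^ p ^ m - 1‖
          ≤ 1 * (c ^ m * r) := by
            exact mul_le_mul (hTnorm n m) (hZ1 _ (htZ (n + m)) m) (norm_nonneg _) zero_le_one
        _ = r * c ^ m := by ring
    choose L hL using fun n => cauchySeq_tendsto_of_complete (hcauchy n)
    have hLr : ∀ n, ‖L n - 1‖ ≤ r := by
      intro n
      have h1 : Tendsto (fun m => ‖((T n m : K)) - 1‖) atTop (𝓝 ‖L n - 1‖) :=
        ((hL n).sub tendsto_const_nhds).norm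
      exact le_of_tendsto h1 (Filter.Eventually.of_forall (hTbound n))
    have hL1 : ∀ n, ‖L n‖ = 1 := fun n =>
      norm_eq_one_of_sub_lt hu _ (lt_of_le_of_lt (hLr n) hr1)
    have hL0 : ∀ n, L n ≠ 0 := fun n => by
      intro h
      have h2 := hL1 n
      rw [h] at h2
      simpa using h2
    set ζ : ℕ → Kˣ := fun n => Units.mk0 (L n) (hL0 n) with hζ
    have hζval : ∀ n, ((ζ n : K)) = L n := fun n => rfl
    have hTz : ∀ n, Tendsto (fun m => T n m) atTop (𝓝 (ζ n)) := by
      intro n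
      rw [Units.isEmbedding_val₀.tendsto_nhds_iff]
      exact hL n
    have hζZ : ∀ n, ζ n ∈ Z := fun n =>
      hZc.mem_of_tendsto (hTz n) (Filter.Eventually.of_forall fun m => hTmem n m)
    have hTsucc : ∀ n m, T n (m + 1) = t n * T (n + 1) m ^ p := by
      intro n m
      rw [hT]
      simp only
      rw [Finset.prod_range_succ' (fun j => t (n + j) ^ p ^ j) m]
      rw [add_zero, pow_zero, pow_one, mul_comm]
      congr 1
      rw [← Finset.prod_pow]
      refine Finset.prod_congr rfl fun j _ => ?_
      rw [← pow_mul, ← pow_succ, show n + (j + 1) = n + 1 + j by omega]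
    have hζrel : ∀ n, ζ n = t n * ζ (n + 1) ^ p := by
      intro n
      have h1 : Tendsto (fun m => T n (m + 1)) atTop (𝓝 (ζ n)) :=
        (hTz n).comp (tendsto_add_atTop_nat 1)
      have h3 : Tendsto (fun m => t n * T (n + 1) m ^ p) atTop (𝓝 (t n * ζ (n + 1) ^ p)) :=
        tendsto_const_nhds.mul ((hTz (n + 1)).pow p)
      simp only [hTsucc] at h1
      exact tendsto_nhds_unique h1 h3
    have hξrel : ∀ n, ξ (n + 1) ^ p = ξ n * (a n * t n) := by
      intro n
      rw [hat n, ← mul_assoc, mul_inv_cancel, one_mul]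
    have hkey : ∀ n, (ξ n * ζ n)⁻¹ * (ξ (n + 1) * ζ (n + 1)) ^ p = a n := by
      intro n
      rw [mul_pow, hξrel n, hζrel n]
      apply Units.ext
      simp only [Units.val_mul, Units.val_inv_eq_inv_val, Units.val_pow_eq_pow_val]
      have h1 := Units.ne_zero (ξ n)
      have h2 := Units.ne_zero (t n)
      have h3 := Units.ne_zero (ζ (n + 1))
      field_simp
    have hxprop : (fun n => (QuotientGroup.mk (ξ n * ζ n) : Kˣ ⧸ N)) ∈ cover K p N := by
      intro n
      simp only
      rw [← QuotientGroup.mk_pow]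
      refine (QuotientGroup.eq).mpr ?_
      rw [hkey n]
      exact haN n
    refine ⟨⟨fun n => QuotientGroup.mk (ξ n * ζ n), hxprop⟩, ?_⟩
    apply Subtype.ext
    funext n
    rw [coverMap_apply]
    show QuotientGroup.map N M (MonoidHom.id Kˣ) hNM (QuotientGroup.mk (ξ n * ζ n))
      = (y : ∀ _ : ℕ, Kˣ ⧸ M) n
    show (QuotientGroup.mk (ξ n * ζ n) : Kˣ ⧸ M) = (y : ∀ _ : ℕ, Kˣ ⧸ M) n
    rw [← hξ n]
    refine (QuotientGroup.eq).mpr ?_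
    have hmk2 : (ξ n * ζ n)⁻¹ * ξ n = (ζ n)⁻¹ := by
      rw [mul_inv_rev, mul_assoc, inv_mul_cancel, mul_one]
    rw [hmk2]
    exact M.inv_mem (hZM (hζZ n))
  -- the isomorphism
  set e : cover K p N ≃* cover K p M := MulEquiv.ofBijective φ ⟨hinj, hsurj⟩ with he
  have hecoe : ⇑e = ⇑φ := rfl
  -- forward continuity
  have hqmapc : Continuous (QuotientGroup.map N M (MonoidHom.id Kˣ) hNM) := by
    rw [← (QuotientGroup.isOpenQuotientMap_mk (N := N)).continuous_comp_iff]
    have heq : (QuotientGroup.map N M (MonoidHom.id Kˣ) hNM) ∘ (QuotientGroup.mk) =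
        fun g : Kˣ => (QuotientGroup.mk g : Kˣ ⧸ M) := by
      funext g
      rfl
    rw [heq]
    exact (QuotientGroup.isOpenQuotientMap_mk (N := M)).continuous
  have hφc : Continuous φ := by
    refine continuous_induced_rng.mpr ?_
    refine continuous_pi fun n => ?_
    exact hqmapc.comp ((continuous_apply n).comp continuous_subtype_val)
  -- inverse continuity
  have hsymmc : Continuous ⇑e.symm := by
    refine continuous_of_continuousAt_one e.symm ?_
    rw [ContinuousAt, map_one, tendsto_subtype_rng, tendsto_pi_nhds]
    intro n
    have hone : ((1 : cover K p N) : ∀ _ : ℕ, Kˣ ⧸ N) n = 1 := rfl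
    rw [hone]
    intro S hS
    rw [Filter.mem_map]
    -- pull back the neighborhood S to a ball in K
    have hT0 : QuotientGroup.mk ⁻¹' S ∈ 𝓝 (1 : Kˣ) := by
      have hcont := (QuotientGroup.isOpenQuotientMap_mk (N := N)).continuous
      have h2 := hcont.tendsto (1 : Kˣ)
      rw [show (QuotientGroup.mk (1 : Kˣ) : Kˣ ⧸ N) = 1 from rfl] at h2
      exact h2 hS
    have hT0' : QuotientGroup.mk ⁻¹' S ∈ Filter.comap (Units.val : Kˣ → K) (𝓝 (1 : K)) := by
      have hind := Units.isEmbedding_val₀ (G₀ := K)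
      have h3 : (𝓝 (1 : Kˣ)) = Filter.comap (Units.val : Kˣ → K) (𝓝 (1 : K)) := by
        rw [hind.toIsInducing.nhds_eq_comap (1 : Kˣ), Units.val_one]
      rw [← h3]
      exact hT0
    obtain ⟨Tset, hTnb, hTsub⟩ := Filter.mem_comap.mp hT0'
    obtain ⟨ε, hε, hball⟩ := Metric.mem_nhds_iff.mp hTnb
    set ε0 : ℝ := min ε 1 with hε0def
    have hε0 : 0 < ε0 := lt_min hε one_pos
    obtain ⟨m, hm⟩ := (hc_tendsto.eventually_lt_const hε0).exists
    set B : Set Kˣ := {β : Kˣ | ‖(β : K) - 1‖ < ε0} with hB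
    have hBopen : IsOpen B := by
      have hcont2 : Continuous fun β : Kˣ => ‖(β : K) - 1‖ :=
        (Units.continuous_val.sub continuous_const).norm
      exact isOpen_lt hcont2 continuous_const
    have hV : (QuotientGroup.mk : Kˣ → Kˣ ⧸ M) '' B ∈ 𝓝 (1 : Kˣ ⧸ M) := by
      have hopen : IsOpen ((QuotientGroup.mk : Kˣ → Kˣ ⧸ M) '' B) :=
        QuotientGroup.isOpenMap_coe (N := M) B hBopen
      refine hopen.mem_nhds ?_
      exact ⟨1, by simp [hB, hε0], rfl⟩
    refine Filter.mem_of_superset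
      (((continuous_apply (n + m)).comp continuous_subtype_val).continuousAt.preimage_mem_nhds
        (by simpa using hV)) ?_
    intro y hy
    obtain ⟨β, hβ, hβeq⟩ := hy
    have hxy : φ (e.symm y) = y := e.apply_symm_apply y
    set x : cover K p N := e.symm y with hx
    obtain ⟨ξ₁, hξ₁⟩ := QuotientGroup.mk_surjective ((x : ∀ _ : ℕ, Kˣ ⧸ N) (n + m))
    have hyco : (QuotientGroup.mk ξ₁ : Kˣ ⧸ M) = (y : ∀ _ : ℕ, Kˣ ⧸ M) (n + m) := by
      calc (QuotientGroup.mk ξ₁ : Kˣ ⧸ M)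
          = QuotientGroup.map N M (MonoidHom.id Kˣ) hNM (QuotientGroup.mk ξ₁) := by
            rfl
        _ = ((φ x : cover K p M) : ∀ _ : ℕ, Kˣ ⧸ M) (n + m) := by
            rw [coverMap_apply, hξ₁]
        _ = (y : ∀ _ : ℕ, Kˣ ⧸ M) (n + m) := by rw [hxy]
    have hmem2 : β⁻¹ * ξ₁ ∈ M := (QuotientGroup.eq).mp (hβeq.trans hyco.symm)
    rw [← hM] at hmem2
    obtain ⟨a₁, ha₁, t₁, ht₁, hat₁⟩ := Subgroup.mem_sup.mp hmem2
    have hξdecomp : ξ₁ = β * (a₁ * t₁) := by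
      rw [hat₁, ← mul_assoc, mul_inv_cancel, one_mul]
    have hxn : (x : ∀ _ : ℕ, Kˣ ⧸ N) n = QuotientGroup.mk ((β * t₁) ^ p ^ m) := by
      rw [cover_pow x.2 n m, ← hξ₁, ← QuotientGroup.mk_pow]
      refine (QuotientGroup.eq).mpr ?_
      have hcomp : (ξ₁ ^ p ^ m)⁻¹ * (β * t₁) ^ p ^ m = (a₁ ^ p ^ m)⁻¹ := by
        rw [hξdecomp]
        apply Units.ext
        simp only [Units.val_mul, Units.val_inv_eq_inv_val, Units.val_pow_eq_pow_val, mul_pow]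
        field_simp
      rw [hcomp]
      exact N.inv_mem (N.pow_mem ha₁ _)
    have hβ1 : ‖(β : K) - 1‖ ≤ 1 := le_trans hβ.le (min_le_right ε 1)
    have hγ : ‖(((β * t₁) ^ p ^ m : Kˣ) : K) - 1‖ < ε0 := by
      have hval : (((β * t₁) ^ p ^ m : Kˣ) : K) = ((β : K)) ^ p ^ m * ((t₁ : K)) ^ p ^ m := by
        simp [Units.val_pow_eq_pow_val, Units.val_mul, mul_pow]
      rw [hval]
      have h1 : ‖((t₁ : K)) ^ p ^ m - 1‖ ≤ 1 :=
        le_trans (le_trans (hZ1 t₁ ht₁ m)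
          (mul_le_of_le_one_left hr0 (pow_le_one₀ hc0 hc1.le))) hr1.le
      refine lt_of_le_of_lt (mul_sub_one_le hu _ _ h1) (max_lt ?_ ?_)
      · exact lt_of_le_of_lt (pow_sub_one_le hu _ hβ1 (p ^ m)) hβ
      · exact lt_of_le_of_lt (hZ1 t₁ ht₁ m) hm
    have hmemS : (QuotientGroup.mk ((β * t₁) ^ p ^ m) : Kˣ ⧸ N) ∈ S := by
      apply hTsub
      show (((β * t₁) ^ p ^ m : Kˣ) : K) ∈ Tset
      apply hball
      rw [Metric.mem_ball, dist_eq_norm]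
      exact lt_of_lt_of_le hγ (min_le_left ε 1)
    show ((e.symm y : cover K p N) : ∀ _ : ℕ, Kˣ ⧸ N) n ∈ S
    rw [← hx, hxn]
    exact hmemS
  exact ⟨e, by rw [hecoe]; exact hφc, hsymmc⟩

end TateCoverAux

/-- If `q = q'·z` with `‖z - 1‖ < 1`, then the `p`-adic universal covers of the Tate
curves `Kˣ/q^ℤ` and `Kˣ/q'^ℤ` are isomorphic as topological groups: there is a group
isomorphism which is also a homeomorphism. -/
theorem exists_topologicalGroup_iso_padicUniversalCover
    (K : Type*) [NormedField K] [CompleteSpace K]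
    (hu : ∀ a b : K, ‖a + b‖ ≤ max ‖a‖ ‖b‖)
    (p : ℕ) (hp : p.Prime) (hpK : ‖(p : K)‖ < 1)
    (q' : Kˣ) (hq' : ‖(q' : K)‖ < 1)
    (z : K) (hz : ‖z - 1‖ < 1)
    (q : Kˣ) (hq : (q : K) = (q' : K) * z) :
    ∃ e : padicUniversalCover K p q ≃* padicUniversalCover K p q',
      Continuous e ∧ Continuous e.symm := by
  classical
  -- `z` as a unit
  set zu : Kˣ := q * q'⁻¹ with hzu
  have hzuv : (zu : K) = z := by
    have hq'0 : (q' : K) ≠ 0 := Units.ne_zero q'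
    rw [hzu, Units.val_mul, Units.val_inv_eq_inv_val, hq, mul_comm, ← mul_assoc, inv_mul_cancel₀ hq'0, one_mul]
  -- the closed subgroup of powers of `z`
  have hr1 : ‖z - 1‖ < 1 := hz
  set Z : Subgroup Kˣ := (Subgroup.zpowers zu).topologicalClosure with hZ
  have hZc : IsClosed (Z : Set Kˣ) := Subgroup.isClosed_topologicalClosure _
  have hZr : ∀ t ∈ Z, ‖(t : K) - 1‖ ≤ ‖z - 1‖ := by
    intro t ht
    have hCcl : IsClosed {x : Kˣ | ‖(x : K) - 1‖ ≤ ‖z - 1‖} := by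
      have : Continuous fun x : Kˣ => ‖(x : K) - 1‖ :=
        (Units.continuous_val.sub continuous_const).norm
      exact isClosed_le this continuous_const
    have hsub : closure ((Subgroup.zpowers zu : Subgroup Kˣ) : Set Kˣ)
        ⊆ {x : Kˣ | ‖(x : K) - 1‖ ≤ ‖z - 1‖} := by
      refine closure_minimal ?_ hCcl
      rintro x ⟨m, rfl⟩
      have := TateCoverAux.unit_zpow_sub_one_le hu zu (by rw [hzuv]; exact hz) m
      rw [hzuv] at this
      exact this
    have : t ∈ closure ((Subgroup.zpowers zu : Subgroup Kˣ) : Set Kˣ) := by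
      rw [hZ] at ht
      exact ht
    exact hsub this
  -- Subgroups containing no nontrivial norm-one elements
  have hNfact : ∀ u : Kˣ, ‖(u : K)‖ < 1 →
      ∀ x ∈ Subgroup.zpowers u, ‖(x : K)‖ = 1 → x = 1 := by
    rintro u hu1 x ⟨m, rfl⟩ hx
    have hu0 : (0 : ℝ) < ‖(u : K)‖ := norm_pos_iff.mpr (Units.ne_zero u)
    have : ‖(u : K)‖ ^ m = 1 := by
      rw [← hx, Units.val_zpow_eq_zpow_val, norm_zpow]
    have hm : m = 0 := by
      rw [zpow_eq_one_iff_right₀ hu0.le (by linarith)] at this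
      exact this
    simp [hm]
  -- the common bigger subgroup
  set M : Subgroup Kˣ := Subgroup.zpowers q ⊔ Z with hMdef
  have hzuZ : zu ∈ Z := Subgroup.le_topologicalClosure _ (Subgroup.mem_zpowers zu)
  have hM' : Subgroup.zpowers q' ⊔ Z = M := by
    rw [hMdef]
    apply le_antisymm
    · refine sup_le ?_ le_sup_right
      rw [Subgroup.zpowers_le]
      have hz0 : z ≠ 0 := by rw [← hzuv]; exact Units.ne_zero zu
      have : q' = q * zu⁻¹ := by
        apply Units.ext
        rw [Units.val_mul, Units.val_inv_eq_inv_val, hzuv, hq]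
        field_simp
      rw [this]
      exact Subgroup.mul_mem _ (le_sup_left (α := Subgroup Kˣ)
        (Subgroup.mem_zpowers q)) (le_sup_right (α := Subgroup Kˣ) (Subgroup.inv_mem _ hzuZ))
    · refine sup_le ?_ le_sup_right
      rw [Subgroup.zpowers_le]
      have : q = q' * zu := by
        apply Units.ext
        rw [Units.val_mul, hzuv, hq]
      rw [this]
      exact Subgroup.mul_mem _ (le_sup_left (α := Subgroup Kˣ)
        (Subgroup.mem_zpowers q')) (le_sup_right (α := Subgroup Kˣ) hzuZ)
  have hqn : ‖(q : K)‖ < 1 := by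
    rw [hq, norm_mul, TateCoverAux.norm_eq_one_of_sub_lt hu z hz, mul_one]
    exact hq'
  obtain ⟨e1, he1, he1s⟩ := TateCoverAux.key K hu p hpK ‖z - 1‖ hr1 (Subgroup.zpowers q) Z M rfl
    hZc hZr (hNfact q hqn)
  obtain ⟨e2, he2, he2s⟩ := TateCoverAux.key K hu p hpK ‖z - 1‖ hr1 (Subgroup.zpowers q') Z M hM'
    hZc hZr (hNfact q' hq')
  exact ⟨e1.trans e2.symm, he2s.comp he1, he1s.comp he2⟩
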